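/- Assume that 𝒜 is closed and star shaped, 𝒫 is closed and star shaped, and V₀ is lower semicontinuous and star shaped. Then for every scalable acceptable deal x ∈ ℝ^N and every λ > 0 one has λx ∈ 𝒫, V₀(λx) ≤ 0, and λV₁(x) ∈ 𝒜. In particular, every scalable acceptable deal is an acceptable deal, i.e. x ∈ 𝒫, V₀(x) ≤ 0, and V₁(x) ∈ 𝒜 with V₁(x) ≠ 0. -/

import Mathlib

open Topology Filter Set Pointwise

noncomputable section

/-- The asymptotic cone `C^∞` of a set `C` in a real topological vector space: the set of all
limits `z` of nets `l_α • c_α` with `c_α ∈ C`, `l_α ≥ 0`, `l_α → 0`, expressed via the standard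
neighborhood characterization of net convergence. -/
def asymCone {E : Type*} [AddCommMonoid E] [SMul ℝ E] [TopologicalSpace E] (C : Set E) :
    Set E :=
  {z | ∀ U ∈ 𝓝 z, ∀ ε : ℝ, 0 < ε → ∃ c ∈ C, ∃ l : ℝ, 0 ≤ l ∧ l < ε ∧ l • c ∈ U}

/-- Epigraph of a real-valued function. -/
def epigraph {E : Type*} (f : E → ℝ) : Set (E × ℝ) := {p | f p.1 ≤ p.2}

/-- The risk measure `ρ` associated to `(A, P, V₀, V₁)`, valued in the extended reals
(`sInf ∅ = ⊤`). -/
def riskM {X : Type*} [AddCommMonoid X] {N : ℕ} (A : Set X) (P : Set (Fin N → ℝ))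
    (V₀ : (Fin N → ℝ) → ℝ) (V₁ : (Fin N → ℝ) → X) (Z : X) : EReal :=
  sInf ((fun x => ((V₀ x : ℝ) : EReal)) '' {x | x ∈ P ∧ Z + V₁ x ∈ A})

/-- The set `ℒ = {x ∈ 𝒫^∞ : V₀^∞(x) ≤ 0, V₁(x) ∈ 𝒜^∞}`.  Here `V₀^∞(x) ≤ 0` is expressed as
`(x, 0)` belonging to the asymptotic cone of the epigraph of `V₀`, which is by definition the
epigraph of `V₀^∞`. -/
def Lset {X : Type*} [AddCommMonoid X] [SMul ℝ X] [TopologicalSpace X] {N : ℕ}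
    (A : Set X) (P : Set (Fin N → ℝ)) (V₀ : (Fin N → ℝ) → ℝ) (V₁ : (Fin N → ℝ) → X) :
    Set (Fin N → ℝ) :=
  {x | x ∈ asymCone P ∧ (x, (0 : ℝ)) ∈ asymCone (epigraph V₀) ∧ V₁ x ∈ asymCone A}

/-- Upper semicontinuity of the liquidation rule `V₁` relative to the ordering cone `Xp`:
for every `x` and every neighborhood `U` of `V₁ x` there is a neighborhood `W` of `x` with
`V₁(W) ⊆ U - Xp`. -/
def USCV1 {X : Type*} [AddCommGroup X] [TopologicalSpace X] {N : ℕ}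
    (Xp : Set X) (V₁ : (Fin N → ℝ) → X) : Prop :=
  ∀ x : Fin N → ℝ, ∀ U ∈ 𝓝 (V₁ x), ∃ W ∈ 𝓝 x, ∀ y ∈ W, ∃ u ∈ U, ∃ p ∈ Xp, V₁ y = u - p


lemma asymCone_smul_mem {E : Type*} [AddCommGroup E] [Module ℝ E] [TopologicalSpace E]
    [ContinuousSMul ℝ E]
    (C : Set E) (hcl : IsClosed C) (hstar : ∀ l : ℝ, 0 ≤ l → l ≤ 1 → ∀ c ∈ C, l • c ∈ C)
    {z : E} (hz : z ∈ asymCone C) {t : ℝ} (ht : 0 < t) : t • z ∈ C := by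
  rw [← hcl.closure_eq]
  rw [mem_closure_iff_nhds]
  intro U hU
  have hU' : (fun w => t • w) ⁻¹' U ∈ 𝓝 z := by
    exact (continuous_const_smul t).continuousAt.preimage_mem_nhds hU
  obtain ⟨c, hc, l, hl0, hlt, hmem⟩ := hz _ hU' (1 / t) (by positivity)
  refine ⟨t • l • c, hmem, ?_⟩
  rw [smul_smul]
  have hlt1 : t * l < 1 := by
    have := (lt_div_iff₀ ht).mp hlt; linarith
  exact hstar _ (by positivity) hlt1.le c hc

lemma lsc_isClosed_epigraph {E : Type*} [TopologicalSpace E] {f : E → ℝ}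
    (hf : LowerSemicontinuous f) : IsClosed (epigraph f) := by
  rw [← isOpen_compl_iff, isOpen_iff_mem_nhds]
  rintro ⟨x, t⟩ h
  have ht : t < f x := lt_of_not_ge h
  obtain ⟨s, hs1, hs2⟩ := exists_between ht
  have h1 : {y | s < f y} ∈ 𝓝 x := hf x s hs2
  refine mem_of_superset (prod_mem_nhds h1 (Iio_mem_nhds hs1)) ?_
  rintro ⟨y, r⟩ ⟨hy, hr⟩
  simp only [mem_compl_iff, epigraph, mem_setOf_eq, not_le]
  simp only [mem_setOf_eq] at hy
  simp only [mem_Iio] at hr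
  linarith

theorem stmt9
    {X : Type*} [AddCommGroup X] [Module ℝ X] [TopologicalSpace X]
    [IsTopologicalAddGroup X] [ContinuousSMul ℝ X]
    (Xp : Set X) (hXp_cone : ∀ c : ℝ, 0 ≤ c → ∀ z ∈ Xp, c • z ∈ Xp)
    (hXp_conv : Convex ℝ Xp)
    {N : ℕ} (hN : 1 ≤ N)
    (P : Set (Fin N → ℝ)) (hP0 : (0 : Fin N → ℝ) ∈ P)
    (V₀ : (Fin N → ℝ) → ℝ) (hV₀0 : V₀ 0 = 0) (hV₀sp : ∀ x, -V₀ (-x) ≤ V₀ x)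
    (V₁ : (Fin N → ℝ) → X) (hV₁0 : V₁ 0 = 0) (hV₁sp : ∀ x, -V₁ (-x) - V₁ x ∈ Xp)
    (A : Set X) (hA0 : (0 : X) ∈ A) (hAmono : ∀ a ∈ A, ∀ p ∈ Xp, a + p ∈ A)
    (hAcl : IsClosed A) (hAstar : ∀ l : ℝ, 0 ≤ l → l ≤ 1 → ∀ a ∈ A, l • a ∈ A)
    (hPcl : IsClosed P) (hPstar : ∀ l : ℝ, 0 ≤ l → l ≤ 1 → ∀ x ∈ P, l • x ∈ P)
    (hV₀lsc : LowerSemicontinuous V₀)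
    (hV₀star : ∀ l : ℝ, 0 ≤ l → l ≤ 1 → ∀ x, V₀ (l • x) ≤ l * V₀ x) :
    ∀ x : Fin N → ℝ, x ∈ Lset A P V₀ V₁ → V₁ x ≠ 0 →
      (∀ l : ℝ, 0 < l → l • x ∈ P ∧ V₀ (l • x) ≤ 0 ∧ l • V₁ x ∈ A) ∧
      (x ∈ P ∧ V₀ x ≤ 0 ∧ V₁ x ∈ A ∧ V₁ x ≠ 0) := by
  intro x hx hne
  obtain ⟨hxP, hxV0, hxV1⟩ := hx
  have hepi_cl : IsClosed (epigraph V₀) := lsc_isClosed_epigraph hV₀lsc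
  have hepi_star : ∀ l : ℝ, 0 ≤ l → l ≤ 1 → ∀ p ∈ epigraph V₀, l • p ∈ epigraph V₀ := by
    intro l hl0 hl1 p hp
    have := hV₀star l hl0 hl1 p.1
    have h2 : l * V₀ p.1 ≤ l * p.2 := mul_le_mul_of_nonneg_left hp hl0
    simpa [epigraph, Prod.smul_def, smul_eq_mul] using this.trans h2
  have main : ∀ l : ℝ, 0 < l → l • x ∈ P ∧ V₀ (l • x) ≤ 0 ∧ l • V₁ x ∈ A := by
    intro l hl
    refine ⟨asymCone_smul_mem P hPcl hPstar hxP hl, ?_,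
      asymCone_smul_mem A hAcl hAstar hxV1 hl⟩
    have := asymCone_smul_mem (epigraph V₀) hepi_cl hepi_star hxV0 hl
    simpa [epigraph, Prod.smul_def] using this
  refine ⟨main, ?_⟩
  have h1 := main 1 one_pos
  simp only [one_smul] at h1
  exact ⟨h1.1, h1.2.1, h1.2.2, hne⟩
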